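/- Let N ≥ 2, let A be a Hermitian N×N complex matrix with τ = tr A, let v ∈ ℂ^N be a unit vector with α = ⟨v, A v⟩, and assume τ ≠ 0, α ≠ 0 and Nα ≠ τ. Then the Choi matrix Z_A = (1/α)·A ⊗ P + (1/(N/τ − 1/α))·(𝟙 − A/α) ⊗ (𝟙/τ − P/α) satisfies the fixed-point condition: the partial trace over the second factor of Z_A·(𝟙 ⊗ Aᵀ) equals A, i.e. for all indices i, j ∈ {1, …, N}, ∑_{k=1}^{N} (Z_A·(𝟙 ⊗ Aᵀ))[(i,k),(j,k)] = A[i,j]. -/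

import Mathlib

open Matrix Kronecker

/-- The Choi matrix `Z_A` satisfies the fixed-point condition: the partial
trace over the second factor of `Z_A·(𝟙 ⊗ Aᵀ)` equals `A`, i.e.
`∑ₖ (Z_A·(𝟙 ⊗ Aᵀ))[(i,k),(j,k)] = A[i,j]`. -/
theorem choi_fixed_point_condition (N : ℕ) (hN : 2 ≤ N)
    (A : Matrix (Fin N) (Fin N) ℂ) (hA : A.IsHermitian)
    (v : Fin N → ℂ) (hv : star v ⬝ᵥ v = 1)
    (τ α : ℝ) (hτ : A.trace = (τ : ℂ)) (hα : star v ⬝ᵥ A.mulVec v = (α : ℂ))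
    (hτ0 : τ ≠ 0) (hα0 : α ≠ 0) (hNα : (N : ℝ) * α ≠ τ)
    (P : Matrix (Fin N) (Fin N) ℂ) (hP : P = vecMulVec (star v) v)
    (Z : Matrix (Fin N × Fin N) (Fin N × Fin N) ℂ)
    (hZ : Z = ((α : ℂ))⁻¹ • (A ⊗ₖ P) +
      ((((N : ℝ) / τ - 1 / α : ℝ) : ℂ))⁻¹ •
        ((1 - ((α : ℂ))⁻¹ • A) ⊗ₖ (((τ : ℂ))⁻¹ • 1 - ((α : ℂ))⁻¹ • P))) :
    ∀ i j : Fin N,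
      ∑ k : Fin N, (Z * ((1 : Matrix (Fin N) (Fin N) ℂ) ⊗ₖ Aᵀ)) (i, k) (j, k) = A i j := by
  intro i j
  have hα' : (α : ℂ) ≠ 0 := by exact_mod_cast hα0
  have hτ' : (τ : ℂ) ≠ 0 := by exact_mod_cast hτ0
  have key1 : ∑ k, ∑ q, (starRingEnd ℂ) (v k) * v q * A k q = (α : ℂ) := by
    rw [← hα]
    simp only [dotProduct, mulVec, Pi.star_apply, Finset.mul_sum, dotProduct]
    refine Finset.sum_congr rfl fun k _ => Finset.sum_congr rfl fun q _ => ?_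
    rw [show star (v k) = (starRingEnd ℂ) (v k) from rfl]; ring
  have key2 : ∑ k, A k k = (τ : ℂ) := by
    rw [← hτ]; simp [Matrix.trace, Matrix.diag]
  subst hZ hP
  simp only [Matrix.mul_apply, Fintype.sum_prod_type, Matrix.add_apply, Matrix.smul_apply,
    Matrix.sub_apply, kroneckerMap_apply, Matrix.one_apply, vecMulVec_apply, transpose_apply,
    smul_eq_mul, Pi.star_apply]
  set b : ℂ := ((((N : ℝ) / τ - 1 / α : ℝ) : ℂ))⁻¹ with hb
  set Bij : ℂ := (if i = j then (1:ℂ) else 0) - (α:ℂ)⁻¹ * A i j with hBij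
  have step : ∀ k : Fin N,
      ∑ p, ∑ q, ((α:ℂ)⁻¹ * (A i p * ((starRingEnd ℂ) (v k) * v q)) +
        b * (((if i = p then (1:ℂ) else 0) - (α:ℂ)⁻¹ * A i p) *
          ((τ:ℂ)⁻¹ * (if k = q then (1:ℂ) else 0) - (α:ℂ)⁻¹ * ((starRingEnd ℂ) (v k) * v q)))) *
        (if p = j then A k q else 0)
      = ∑ q, (((α:ℂ)⁻¹ * A i j) * ((starRingEnd ℂ) (v k) * v q * A k q)
        + (b * Bij) * ((τ:ℂ)⁻¹ * (if k = q then (1:ℂ) else 0) * A k q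
            - (α:ℂ)⁻¹ * ((starRingEnd ℂ) (v k) * v q * A k q))) := by
    intro k
    rw [Finset.sum_comm]
    refine Finset.sum_congr rfl fun q _ => ?_
    rw [Finset.sum_eq_single j]
    · simp only [if_pos rfl, hBij, if_true, eq_self_iff_true]; ring
    · intro p _ hp; simp [hp]
    · simp
  refine Eq.trans (Finset.sum_congr rfl fun k _ => Eq.trans ?_ (step k)) ?_
  · refine Finset.sum_congr rfl fun p _ => Finset.sum_congr rfl fun q _ => ?_
    simp [ite_mul]
  · have hδ : ∀ k : Fin N, ∑ q, (τ:ℂ)⁻¹ * (if k = q then (1:ℂ) else 0) * A k q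
        = (τ:ℂ)⁻¹ * A k k := by
      intro k
      simp [ite_mul, mul_ite]
    simp only [Finset.sum_add_distrib, Finset.sum_sub_distrib, hδ, ← Finset.mul_sum, key1, key2]
    rw [inv_mul_cancel₀ hτ', inv_mul_cancel₀ hα']
    field_simp [hBij]
    ring
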